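/- (Saturation of the operator Popoviciu inequality.) Let M be a Hermitian d×d complex matrix, let v_max and v_min be unit eigenvectors of M for its largest eigenvalue λ_max(M) and its smallest eigenvalue λ_min(M) respectively, and let φ ∈ ℝ. Then the unit vector ψ := (v_max + e^{iφ} v_min)/√2 satisfies ⟨ψ, M²ψ⟩ − ⟨ψ, Mψ⟩² = (λ_max(M) − λ_min(M))²/4. -/

import Mathlib

open Matrix

/-- **Saturation of the operator Popoviciu inequality.** If `vmax` and `vmin` are orthogonal unit
eigenvectors of a Hermitian matrix `M` for its largest and smallest eigenvalues, then the unit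
vector `ψ = (vmax + e^{iφ} vmin)/√2` satisfies
`⟨ψ, M²ψ⟩ − ⟨ψ, Mψ⟩² = (λ_max(M) − λ_min(M))²/4`. -/
theorem operator_popoviciu_saturation {d : ℕ} [NeZero d]
    (M : Matrix (Fin d) (Fin d) ℂ) (hM : M.IsHermitian)
    (lmax lmin : ℝ)
    (hlmax : lmax = Finset.univ.sup' Finset.univ_nonempty hM.eigenvalues)
    (hlmin : lmin = Finset.univ.inf' Finset.univ_nonempty hM.eigenvalues)
    (vmax vmin : Fin d → ℂ) (φ : ℝ)
    (hvmax1 : star vmax ⬝ᵥ vmax = 1) (hvmin1 : star vmin ⬝ᵥ vmin = 1)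
    (horth : star vmax ⬝ᵥ vmin = 0)
    (hevmax : M *ᵥ vmax = (lmax : ℂ) • vmax)
    (hevmin : M *ᵥ vmin = (lmin : ℂ) • vmin)
    (ψ : Fin d → ℂ)
    (hψ : ψ = ((Real.sqrt 2 : ℂ))⁻¹ • (vmax + Complex.exp (Complex.I * φ) • vmin)) :
    (star ψ ⬝ᵥ (M * M) *ᵥ ψ).re - ((star ψ ⬝ᵥ M *ᵥ ψ).re) ^ 2
      = (lmax - lmin) ^ 2 / 4 := by
  set e : ℂ := Complex.exp (Complex.I * φ) with he
  have horth' : star vmin ⬝ᵥ vmax = 0 := by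
    have := congrArg star horth
    rwa [star_dotProduct, star_star, star_zero] at this
  have hee : (starRingEnd ℂ) e * e = 1 := by
    rw [he, ← Complex.exp_conj, ← Complex.exp_add]
    have : (starRingEnd ℂ) (Complex.I * φ) + Complex.I * φ = 0 := by
      simp [Complex.ext_iff]
    rw [this, Complex.exp_zero]
  have hc : ((Real.sqrt 2 : ℂ))⁻¹ * (starRingEnd ℂ) ((Real.sqrt 2 : ℂ))⁻¹ = (2⁻¹ : ℂ) := by
    rw [map_inv₀, Complex.conj_ofReal, ← mul_inv, ← Complex.ofReal_mul,
      Real.mul_self_sqrt (by norm_num)]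
    norm_num
  have key : ∀ (a b : ℝ) (N : Matrix (Fin d) (Fin d) ℂ),
      N *ᵥ vmax = (a : ℂ) • vmax → N *ᵥ vmin = (b : ℂ) • vmin →
      star ψ ⬝ᵥ N *ᵥ ψ = (((a + b) / 2 : ℝ) : ℂ) := by
    intro a b N hNa hNb
    subst hψ
    simp only [mulVec_smul, mulVec_add, hNa, hNb, star_smul, star_add,
      dotProduct_smul, smul_dotProduct, dotProduct_add, add_dotProduct,
      hvmax1, hvmin1, horth, horth', smul_eq_mul, star_one, RCLike.star_def,
      Complex.ofReal_div, Complex.ofReal_add, Complex.ofReal_ofNat]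
    have hs2 : ((Real.sqrt 2 : ℝ) : ℂ) ^ 2 = 2 := by
      rw [← Complex.ofReal_pow, Real.sq_sqrt (by norm_num : (2:ℝ) ≥ 0)]
      norm_num
    field_simp
    ring_nf
    rw [map_inv₀, Complex.conj_ofReal]
    have hne : ((Real.sqrt 2 : ℝ) : ℂ) ≠ 0 :=
      Complex.ofReal_ne_zero.mpr (Real.sqrt_ne_zero'.mpr (by norm_num))
    have hinv : ((Real.sqrt 2 : ℝ) : ℂ)⁻¹ * 2 = ((Real.sqrt 2 : ℝ) : ℂ) := by
      rw [← hs2, pow_two, ← mul_assoc, inv_mul_cancel₀ hne, one_mul]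
    linear_combination ((a : ℂ) + b) * hinv
      + (b : ℂ) * ((Real.sqrt 2 : ℝ) : ℂ)⁻¹ * 2 * hee
  have h1 : star ψ ⬝ᵥ M *ᵥ ψ = (((lmax + lmin) / 2 : ℝ) : ℂ) :=
    key _ _ M hevmax hevmin
  have h2 : star ψ ⬝ᵥ (M * M) *ᵥ ψ = (((lmax ^ 2 + lmin ^ 2) / 2 : ℝ) : ℂ) := by
    apply key
    · rw [← mulVec_mulVec, hevmax, mulVec_smul, hevmax, smul_smul, ← Complex.ofReal_mul, sq]
    · rw [← mulVec_mulVec, hevmin, mulVec_smul, hevmin, smul_smul, ← Complex.ofReal_mul, sq]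
  rw [h1, h2, Complex.ofReal_re, Complex.ofReal_re]
  ring
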